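/- For all real R ≥ 0, the Riesz mean Σ_{n≥1} (R⁴ − (n + 1/2)⁴)_+ satisfies (4/5)R⁵ − R⁴ − (11/6)R³ − (3/2)R² − (127/240)R ≤ Σ_{n≥1} (R⁴ − (n+1/2)⁴)_+ ≤ (4/5)R⁵ − R⁴ + (1/6)R³ + (3/2)R² + (1/30)R + 1/8. -/

import Mathlib

set_option maxHeartbeats 800000

lemma riesz_sum_closed (R : ℝ) (N : ℕ) :
    ∑ n ∈ Finset.range N, (R^4 - ((n : ℝ) + 1 + 1/2)^4) =
      (N : ℝ) * R^4 - ((N : ℝ)^5/5 + (N : ℝ)^4 + (11/6) * (N : ℝ)^3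
        + (3/2) * (N : ℝ)^2 + (127/240) * (N : ℝ)) := by
  induction N with
  | zero => simp
  | succ k ih =>
      rw [Finset.sum_range_succ, ih]
      push_cast
      ring


lemma riesz_poly_bounds (x t : ℝ) (hx0 : 0 ≤ x) (ht0 : 0 ≤ t) (ht1 : t ≤ 1) :
    (4/5) * (x+1/2+t)^5 - (x+1/2+t)^4 - (11/6) * (x+1/2+t)^3 - (3/2) * (x+1/2+t)^2
        - (127/240) * (x+1/2+t) ≤
      x * (x+1/2+t)^4 - (x^5/5 + x^4 + (11/6) * x^3 + (3/2) * x^2 + (127/240) * x) ∧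
    x * (x+1/2+t)^4 - (x^5/5 + x^4 + (11/6) * x^3 + (3/2) * x^2 + (127/240) * x) ≤
      (4/5) * (x+1/2+t)^5 - (x+1/2+t)^4 + (1/6) * (x+1/2+t)^3 + (3/2) * (x+1/2+t)^2
        + (1/30) * (x+1/2+t) + 1/8 := by
  have h1t : (0:ℝ) ≤ 1 - t := by linarith
  have htt : (0:ℝ) ≤ t*(1-t) := mul_nonneg ht0 h1t
  have p1 : (0:ℝ) ≤ t^3*(1-t) := mul_nonneg (pow_nonneg ht0 3) h1t
  have p2 : (0:ℝ) ≤ t^3*(1-t)*(1+t) := mul_nonneg p1 (by linarith)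
  have q1 : (0:ℝ) ≤ t^2*(1-t) := mul_nonneg (pow_nonneg ht0 2) h1t
  have q2 : (0:ℝ) ≤ t^2*(1-t)*(1+t) := mul_nonneg q1 (by linarith)
  have r1 : (0:ℝ) ≤ t*(1-t)*(1+t) := mul_nonneg htt (by linarith)
  constructor
  · have c0 : 0 ≤ 29/32 + (877/240)*t + (19/4)*t^2 + (11/6)*t^3 - t^4 - (4/5)*t^5 := by
      nlinarith [p1, p2, ht0, pow_nonneg ht0 2, pow_nonneg ht0 3]
    have c1 : 0 ≤ 51/16 + 10*t + 7*t^2 - 2*t^3 - 3*t^4 := by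
      nlinarith [q1, q2, ht0, pow_nonneg ht0 2]
    have c2 : 0 ≤ 15/4 + (17/2)*t - 4*t^3 := by nlinarith [r1, ht0]
    have c3 : 0 ≤ 3/2 + 2*t - 2*t^2 := by nlinarith [htt]
    linarith [mul_nonneg c1 hx0, mul_nonneg c2 (mul_nonneg hx0 hx0),
      mul_nonneg c3 (mul_nonneg (mul_nonneg hx0 hx0) hx0), c0]
  · have d0 : 0 ≤ 1/2 + (169/120)*t + (5/4)*t^2 + (1/6)*t^3 + t^4 + (4/5)*t^5 := by
      positivity
    have d1 : 0 ≤ 15/8 + 2*t - t^2 + 2*t^3 + 3*t^4 := by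
      nlinarith [htt, pow_nonneg ht0 3, pow_nonneg ht0 4, ht0]
    have d2 : 0 ≤ 9/4 - (5/2)*t + 4*t^3 := by
      nlinarith [mul_nonneg ht0 (sq_nonneg (t - 1/2)), sq_nonneg (t - 7/16)]
    have d3 : 0 ≤ 1/2 - 2*t + 2*t^2 := by nlinarith [sq_nonneg (2*t - 1)]
    linarith [mul_nonneg d1 hx0, mul_nonneg d2 (mul_nonneg hx0 hx0),
      mul_nonneg d3 (mul_nonneg (mul_nonneg hx0 hx0) hx0), d0]

/-- Two-sided bounds for the one-dimensional Riesz mean `Σ_{n≥1} (R⁴ − (n + 1/2)⁴)₊`. -/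
theorem riesz_mean_half_integer_bounds (R : ℝ) (hR : 0 ≤ R) :
    (4/5) * R^5 - R^4 - (11/6) * R^3 - (3/2) * R^2 - (127/240) * R ≤
        (∑' n : ℕ, max (R^4 - ((n : ℝ) + 1 + 1/2)^4) 0) ∧
      (∑' n : ℕ, max (R^4 - ((n : ℝ) + 1 + 1/2)^4) 0) ≤
        (4/5) * R^5 - R^4 + (1/6) * R^3 + (3/2) * R^2 + (1/30) * R + 1/8 := by
  set N : ℕ := ⌊R - 1/2⌋₊ with hN
  -- all terms with index ≥ N vanish
  have hzero : ∀ b : ℕ, b ∉ Finset.range N → max (R^4 - ((b : ℝ) + 1 + 1/2)^4) 0 = 0 := by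
    intro b hb
    rw [Finset.mem_range, not_lt] at hb
    have hb' : (N : ℝ) ≤ (b : ℝ) := by exact_mod_cast hb
    have h1 : R - 1/2 < (N : ℝ) + 1 := Nat.lt_floor_add_one _
    have h2 : R ≤ (b : ℝ) + 1 + 1/2 := by linarith
    have h3 : R^4 ≤ ((b : ℝ) + 1 + 1/2)^4 := by
      apply pow_le_pow_left₀ hR h2
    exact max_eq_right (by linarith)
  have hsum : (∑' n : ℕ, max (R^4 - ((n : ℝ) + 1 + 1/2)^4) 0)
      = ∑ n ∈ Finset.range N, max (R^4 - ((n : ℝ) + 1 + 1/2)^4) 0 :=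
    tsum_eq_sum hzero
  have hmax : ∀ n ∈ Finset.range N, max (R^4 - ((n : ℝ) + 1 + 1/2)^4) 0
      = R^4 - ((n : ℝ) + 1 + 1/2)^4 := by
    intro n hn
    rw [Finset.mem_range] at hn
    have hNpos : 0 < N := lt_of_le_of_lt (Nat.zero_le n) hn
    have h1 : (1 : ℝ) ≤ R - 1/2 := by
      have := (Nat.floor_pos (R := ℝ)).1 (hN ▸ hNpos)
      exact this
    have h0 : (0 : ℝ) ≤ R - 1/2 := by linarith
    have hfl : (N : ℝ) ≤ R - 1/2 := Nat.floor_le h0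
    have hn' : (n : ℝ) + 1 ≤ (N : ℝ) := by exact_mod_cast hn
    have h2 : (n : ℝ) + 1 + 1/2 ≤ R := by linarith
    have h3 : ((n : ℝ) + 1 + 1/2)^4 ≤ R^4 := by
      apply pow_le_pow_left₀ (by positivity) h2
    exact max_eq_left (by linarith)
  rw [hsum, Finset.sum_congr rfl hmax, riesz_sum_closed]
  -- now a polynomial inequality in x := (N : ℝ) and R
  set x : ℝ := (N : ℝ) with hx
  have hx0 : 0 ≤ x := Nat.cast_nonneg N
  have hub : R - 1/2 < x + 1 := Nat.lt_floor_add_one _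
  by_cases hc : N = 0
  · -- small R : the sum is empty, R < 3/2
    have hx0' : x = 0 := by simp [hx, hc]
    rw [hx0']
    have hR32 : R < 3/2 := by rw [hx0'] at hub; linarith
    constructor
    · nlinarith [pow_nonneg hR 2, pow_nonneg hR 3, pow_nonneg hR 4, pow_nonneg hR 5,
        mul_nonneg (mul_nonneg hR hR) hR, sq_nonneg R, sq_nonneg (R - 1/2),
        mul_nonneg (mul_nonneg (mul_nonneg hR hR) hR) (sub_nonneg.2 hR32.le),
        mul_nonneg (pow_nonneg hR 3) (mul_nonneg (sub_nonneg.2 hR32.le) (sub_nonneg.2 hR32.le))]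
    · nlinarith [pow_nonneg hR 2, pow_nonneg hR 3, sq_nonneg (R - 1/2), sq_nonneg (R - 1),
        mul_nonneg (mul_nonneg hR hR) hR,
        mul_nonneg (mul_nonneg (mul_nonneg hR hR) hR) (sub_nonneg.2 hR32.le),
        mul_nonneg (pow_nonneg hR 2) (mul_nonneg (sub_nonneg.2 hR32.le) (sub_nonneg.2 hR32.le))]
  · have hNpos : 0 < N := Nat.pos_of_ne_zero hc
    have h1 : (1 : ℝ) ≤ R - 1/2 := (Nat.floor_pos (R := ℝ)).1 (hN ▸ hNpos)
    have hlb : x ≤ R - 1/2 := Nat.floor_le (by linarith)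
    have hkey := riesz_poly_bounds x (R - 1/2 - x) hx0 (by linarith) (by linarith)
    have hre : x + 1/2 + (R - 1/2 - x) = R := by ring
    rw [hre] at hkey
    exact hkey
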